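/- In the canonical Poisson bracket on ℝ^{2N}, the Demkov–Fradkin components F_{ij} = p_i p_j + α q_i q_j satisfy {F_{ij}, F_{kl}} = α(L_{jl}δ_{ik} + L_{jk}δ_{il} + L_{il}δ_{jk} + L_{ik}δ_{jl}); in particular when α = 0 all the F_{ij} = p_i p_j Poisson-commute. -/

import Mathlib

/-- The canonical Poisson bracket `{f,g} = ∑ s (∂f/∂q_s ∂g/∂p_s - ∂g/∂q_s ∂f/∂p_s)`
of two functions of `(q, p) ∈ ℝᴺ × ℝᴺ`, evaluated at the point `(q, p)`. -/
noncomputable def poissonBracket {N : ℕ} (f g : (Fin N → ℝ) → (Fin N → ℝ) → ℝ)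
    (q p : Fin N → ℝ) : ℝ :=
  ∑ s : Fin N,
    (deriv (fun t => f (Function.update q s t) p) (q s) *
        deriv (fun t => g q (Function.update p s t)) (p s)
      - deriv (fun t => g (Function.update q s t) p) (q s) *
        deriv (fun t => f q (Function.update p s t)) (p s))

/-- Angular momentum `L_{ij} = q_i p_j - q_j p_i`. -/
def angMom {N : ℕ} (i j : Fin N) : (Fin N → ℝ) → (Fin N → ℝ) → ℝ :=
  fun q p => q i * p j - q j * p i

/-- The Demkov–Fradkin tensor component `F_{ij} = p_i p_j + α q_i q_j`. -/
def demkovFradkin {N : ℕ} (α : ℝ) (i j : Fin N) : (Fin N → ℝ) → (Fin N → ℝ) → ℝ :=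
  fun q p => p i * p j + α * q i * q j

lemma hasDerivAt_quad (A B C x : ℝ) :
    HasDerivAt (fun t : ℝ => A + B * t + C * t * t) (B + (C * x + C * x)) x := by
  have h1 : HasDerivAt (fun t : ℝ => A + B * t) B x := by
    simpa using ((hasDerivAt_id x).const_mul B).const_add A
  have h2 : HasDerivAt (fun t : ℝ => C * t * t) (C * x + C * x) x := by
    have := ((hasDerivAt_id x).const_mul C).fun_mul (hasDerivAt_id x)
    simpa [mul_comm] using this
  simpa using h1.fun_add h2

lemma deriv_quad (A B C x : ℝ) :
    deriv (fun t : ℝ => A + B * t + C * t * t) x = B + (C * x + C * x) :=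
  (hasDerivAt_quad A B C x).deriv

lemma deriv_q {N : ℕ} (α : ℝ) (i j s : Fin N) (q p : Fin N → ℝ) :
    deriv (fun t => demkovFradkin α i j (Function.update q s t) p) (q s)
      = α * ((if i = s then 1 else 0) * q j + q i * (if j = s then 1 else 0)) := by
  have h : (fun t => demkovFradkin α i j (Function.update q s t) p)
      = fun t => p i * p j + α * (if i = s then t else q i) * (if j = s then t else q j) := by
    funext t
    simp [demkovFradkin, Function.update]
  rw [h]
  rcases eq_or_ne i s with hi | hi <;> rcases eq_or_ne j s with hj | hj
  · simp only [if_pos hi, if_pos hj]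
    rw [show (fun t => p i * p j + α * t * t)
        = fun t : ℝ => (p i * p j) + 0 * t + α * t * t by funext t; ring, deriv_quad]
    rw [hi, hj]; ring
  · simp only [if_pos hi, if_neg hj]
    rw [show (fun t => p i * p j + α * t * q j)
        = fun t : ℝ => (p i * p j) + (α * q j) * t + 0 * t * t by funext t; ring, deriv_quad]
    ring
  · simp only [if_neg hi, if_pos hj]
    rw [show (fun t => p i * p j + α * q i * t)
        = fun t : ℝ => (p i * p j) + (α * q i) * t + 0 * t * t by funext t; ring, deriv_quad]
    ring
  · simp [hi, hj]

lemma deriv_p {N : ℕ} (α : ℝ) (i j s : Fin N) (q p : Fin N → ℝ) :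
    deriv (fun t => demkovFradkin α i j q (Function.update p s t)) (p s)
      = (if i = s then 1 else 0) * p j + p i * (if j = s then 1 else 0) := by
  have h : (fun t => demkovFradkin α i j q (Function.update p s t))
      = fun t => α * q i * q j + (if i = s then t else p i) * (if j = s then t else p j) := by
    funext t
    simp [demkovFradkin, Function.update]; ring
  rw [h]
  rcases eq_or_ne i s with hi | hi <;> rcases eq_or_ne j s with hj | hj
  · simp only [if_pos hi, if_pos hj]
    rw [show (fun t => α * q i * q j + t * t)
        = fun t : ℝ => (α * q i * q j) + 0 * t + 1 * t * t by funext t; ring, deriv_quad]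
    rw [hi, hj]; ring
  · simp only [if_pos hi, if_neg hj]
    rw [show (fun t => α * q i * q j + t * p j)
        = fun t : ℝ => (α * q i * q j) + (p j) * t + 0 * t * t by funext t; ring, deriv_quad]
    ring
  · simp only [if_neg hi, if_pos hj]
    rw [show (fun t => α * q i * q j + p i * t)
        = fun t : ℝ => (α * q i * q j) + (p i) * t + 0 * t * t by funext t; ring, deriv_quad]
    ring
  · simp [hi, hj]

lemma sum_dd {N : ℕ} (a b : Fin N) (c : ℝ) :
    ∑ s : Fin N, ((if a = s then (1:ℝ) else 0) * (if b = s then 1 else 0)) * c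
      = (if a = b then 1 else 0) * c := by
  simp only [ite_mul, mul_ite, one_mul, zero_mul, mul_zero, Finset.sum_ite_eq,
    Finset.mem_univ, if_true]

theorem poisson_demkovFradkin_demkovFradkin {N : ℕ} (α : ℝ) (i j k l : Fin N)
    (q p : Fin N → ℝ) :
    poissonBracket (demkovFradkin α i j) (demkovFradkin α k l) q p =
      α * (angMom j l q p * (if i = k then 1 else 0)
        + angMom j k q p * (if i = l then 1 else 0)
        + angMom i l q p * (if j = k then 1 else 0)
        + angMom i k q p * (if j = l then 1 else 0)) := by
  unfold poissonBracket
  simp only [deriv_q, deriv_p]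
  have key : ∀ s : Fin N,
      α * ((if i = s then (1:ℝ) else 0) * q j + q i * (if j = s then 1 else 0)) *
          ((if k = s then (1:ℝ) else 0) * p l + p k * (if l = s then 1 else 0))
        - α * ((if k = s then (1:ℝ) else 0) * q l + q k * (if l = s then 1 else 0)) *
          ((if i = s then (1:ℝ) else 0) * p j + p i * (if j = s then 1 else 0))
      = ((if i = s then (1:ℝ) else 0) * (if k = s then 1 else 0)) * (α * (q j * p l - q l * p j))
        + ((if i = s then (1:ℝ) else 0) * (if l = s then 1 else 0)) * (α * (q j * p k - q k * p j))
        + ((if j = s then (1:ℝ) else 0) * (if k = s then 1 else 0)) * (α * (q i * p l - q l * p i))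
        + ((if j = s then (1:ℝ) else 0) * (if l = s then 1 else 0)) * (α * (q i * p k - q k * p i)) := by
    intro s; ring
  rw [Finset.sum_congr rfl (fun s _ => key s)]
  rw [Finset.sum_add_distrib, Finset.sum_add_distrib, Finset.sum_add_distrib,
    sum_dd, sum_dd, sum_dd, sum_dd]
  simp only [angMom]
  ring
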